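/- Define the sequence γ = {τ_k}_{k=1}^∞ by τ_1 = 1 and τ_k = k + Σ_{ℓ=2}^k (1/ℓ) for k ≥ 2. Then γ is an impulse-time sequence, γ belongs to Sdn(1), but γ does not belong to Srad(n,1) for any n ∈ ℕ. -/

import Mathlib

open Set Filter

noncomputable section

/-- An (infinite) impulse-time sequence: strictly increasing, positive, with no finite
limit point (i.e. tending to `∞`). -/
def IsImpSeqFun (τ : ℕ → ℝ) : Prop :=
  StrictMono τ ∧ 0 < τ 0 ∧ Filter.Tendsto τ Filter.atTop Filter.atTop

/-- `seqCnt τ s t` is the number `n^γ_{(s,t]}` of terms of the sequence `τ` lying in `(s, t]`. -/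
def seqCnt (τ : ℕ → ℝ) (s t : ℝ) : ℕ := (Set.range τ ∩ Set.Ioc s t).ncard

/-- Membership in the class `Sup(ρ)` (impulse frequency eventually uniformly upper bounded
by `ρ`), for sequences. -/
def SeqMemSup (ρ : ℝ) (τ : ℕ → ℝ) : Prop :=
  IsImpSeqFun τ ∧ ∀ ε : ℝ, 0 < ε → ∃ T : ℝ, 0 < T ∧
    ∀ t : ℝ, T ≤ t → ∀ s : ℝ, 0 ≤ s → (seqCnt τ s (s + t) : ℝ) / t ≤ ρ + ε

/-- Membership in the class `Sdn(ρ)` (impulse frequency eventually uniformly lower bounded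
by `ρ`), for sequences. -/
def SeqMemSdn (ρ : ℝ) (τ : ℕ → ℝ) : Prop :=
  IsImpSeqFun τ ∧ ∀ ε : ℝ, 0 < ε → ∃ T : ℝ, 0 < T ∧
    ∀ t : ℝ, T ≤ t → ∀ s : ℝ, 0 ≤ s → ρ - ε ≤ (seqCnt τ s (s + t) : ℝ) / t

/-- Membership in the average dwell-time class `Sad(n, τADT)`. -/
def SeqMemSad (n : ℕ) (τADT : ℝ) (τ : ℕ → ℝ) : Prop :=
  IsImpSeqFun τ ∧ ∀ s t : ℝ, 0 ≤ s → s ≤ t → (seqCnt τ s t : ℝ) ≤ (n : ℝ) + (t - s) / τADT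

/-- Membership in the reverse average dwell-time class `Srad(n, τADT)`. -/
def SeqMemSrad (n : ℕ) (τADT : ℝ) (τ : ℕ → ℝ) : Prop :=
  IsImpSeqFun τ ∧ ∀ s t : ℝ, 0 ≤ s → s ≤ t → -(n : ℝ) + (t - s) / τADT ≤ (seqCnt τ s t : ℝ)

/-- The sequence `τ_1 = 1` and `τ_k = k + Σ_{ℓ=2}^k 1/ℓ` for `k ≥ 2`
(indexed here so that `gammaSeq (k-1) = τ_k`). -/
def gammaSeq (k : ℕ) : ℝ :=
  ((k + 1 : ℕ) : ℝ) + ∑ ℓ ∈ Finset.Icc 2 (k + 1), (1 : ℝ) / (ℓ : ℝ)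

lemma gammaSeq_eq (k : ℕ) :
    gammaSeq k = (k + 1 : ℝ) + ∑ i ∈ Finset.range k, (1 : ℝ) / (i + 2) := by
  unfold gammaSeq
  rw [← Finset.Ico_add_one_right_eq_Icc, Finset.sum_Ico_eq_sum_range]
  simp only [show k + 1 + 1 - 2 = k from rfl]
  push_cast
  congr 1
  apply Finset.sum_congr rfl
  intro i _
  rw [add_comm]

lemma gammaSeq_ge (k : ℕ) : (k + 1 : ℝ) ≤ gammaSeq k := by
  rw [gammaSeq_eq]
  have : (0:ℝ) ≤ ∑ i ∈ Finset.range k, (1 : ℝ) / (i + 2) :=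
    Finset.sum_nonneg fun i _ => by positivity
  linarith

lemma gammaSeq_gap {j k : ℕ} (h : j ≤ k) : gammaSeq j + ((k:ℝ) - j) ≤ gammaSeq k := by
  rw [gammaSeq_eq, gammaSeq_eq]
  have hsub : ∑ i ∈ Finset.range j, (1 : ℝ) / (i + 2) ≤ ∑ i ∈ Finset.range k, (1 : ℝ) / (i + 2) := by
    apply Finset.sum_le_sum_of_subset_of_nonneg (Finset.range_subset_range.2 h)
    intro i _ _; positivity
  linarith

lemma gammaSeq_strictMono : StrictMono gammaSeq := by
  apply strictMono_nat_of_lt_succ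
  intro k
  have := gammaSeq_gap (Nat.le_succ k)
  push_cast at this
  linarith

lemma one_div_le_log_sub (j : ℕ) :
    (1 : ℝ) / (j + 2) ≤ Real.log (j + 2) - Real.log (j + 1) := by
  have h1 : (0:ℝ) < j + 1 := by positivity
  have h2 : (0:ℝ) < j + 2 := by positivity
  have := Real.log_le_sub_one_of_pos (show (0:ℝ) < (j+1)/(j+2) by positivity)
  rw [Real.log_div (by positivity) (by positivity)] at this
  have hd : ((j:ℝ)+1)/((j:ℝ)+2) - 1 = -(1/((j:ℝ)+2)) := by field_simp; norm_num
  rw [hd] at this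
  linarith

lemma log_sub_le_one_div (j : ℕ) :
    Real.log (j + 3) - Real.log (j + 2) ≤ (1 : ℝ) / (j + 2) := by
  have := Real.log_le_sub_one_of_pos (show (0:ℝ) < ((j:ℝ)+3)/((j:ℝ)+2) by positivity)
  rw [Real.log_div (by positivity) (by positivity)] at this
  have hd : ((j:ℝ)+3)/((j:ℝ)+2) - 1 = 1/((j:ℝ)+2) := by field_simp; norm_num
  rw [hd] at this
  linarith

lemma sum_one_div_le_log (n : ℕ) :
    ∑ j ∈ Finset.range n, (1 : ℝ) / (j + 2) ≤ Real.log (n + 1) := by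
  have tel : ∑ j ∈ Finset.range n, (Real.log (j + 2) - Real.log (j + 1))
      = Real.log (n + 1) - Real.log 1 := by
    have := Finset.sum_range_sub (fun j : ℕ => Real.log (j + 1)) n
    convert this using 2 with j
    · push_cast; ring_nf
    · simp
  calc ∑ j ∈ Finset.range n, (1 : ℝ) / (j + 2)
      ≤ ∑ j ∈ Finset.range n, (Real.log (j + 2) - Real.log (j + 1)) :=
        Finset.sum_le_sum fun j _ => one_div_le_log_sub j
    _ = Real.log (n + 1) - Real.log 1 := tel
    _ ≤ Real.log (n + 1) := by simp

lemma log_le_sum_one_div (n : ℕ) :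
    Real.log (n + 2) - Real.log 2 ≤ ∑ j ∈ Finset.range n, (1 : ℝ) / (j + 2) := by
  have tel : ∑ j ∈ Finset.range n, (Real.log (j + 3) - Real.log (j + 2))
      = Real.log (n + 2) - Real.log 2 := by
    have := Finset.sum_range_sub (fun j : ℕ => Real.log (j + 2)) n
    convert this using 2 with j
    · push_cast; ring_nf
    · norm_num
  calc Real.log (n + 2) - Real.log 2
      = ∑ j ∈ Finset.range n, (Real.log (j + 3) - Real.log (j + 2)) := tel.symm
    _ ≤ ∑ j ∈ Finset.range n, (1 : ℝ) / (j + 2) :=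
        Finset.sum_le_sum fun j _ => log_sub_le_one_div j

lemma log_le_two_sqrt {x : ℝ} (hx : 1 ≤ x) : Real.log x ≤ 2 * Real.sqrt x := by
  have hx0 : (0:ℝ) ≤ x := by linarith
  have hs : 0 < Real.sqrt x := Real.sqrt_pos.2 (by linarith)
  have h1 : Real.log (Real.sqrt x) ≤ Real.sqrt x - 1 := Real.log_le_sub_one_of_pos hs
  have h2 : Real.log (Real.sqrt x) = Real.log x / 2 := Real.log_sqrt hx0
  linarith [h2 ▸ h1]

lemma gammaSeq_exists_gt (x : ℝ) : ∃ k : ℕ, x < gammaSeq k := by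
  refine ⟨⌈x⌉₊, lt_of_lt_of_le ?_ (gammaSeq_ge _)⟩
  have := Nat.le_ceil x
  linarith

def fIdx (x : ℝ) : ℕ := Nat.find (gammaSeq_exists_gt x)

lemma fIdx_le_iff {x : ℝ} {k : ℕ} : fIdx x ≤ k ↔ x < gammaSeq k := by
  constructor
  · intro h
    exact lt_of_lt_of_le (Nat.find_spec (gammaSeq_exists_gt x))
      (gammaSeq_strictMono.monotone h)
  · intro h
    by_contra hc
    exact Nat.find_min (gammaSeq_exists_gt x) (by omega : k < fIdx x) h

lemma fIdx_mono {x y : ℝ} (h : x ≤ y) : fIdx x ≤ fIdx y :=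
  fIdx_le_iff.2 (lt_of_le_of_lt h (fIdx_le_iff.1 le_rfl))

lemma gammaSeq_fIdx_gt (x : ℝ) : x < gammaSeq (fIdx x) := fIdx_le_iff.1 le_rfl

lemma gammaSeq_le_of_lt_fIdx {x : ℝ} {k : ℕ} (h : k < fIdx x) : gammaSeq k ≤ x := by
  by_contra hc
  exact absurd (fIdx_le_iff.2 (lt_of_not_ge hc)) (by omega)

lemma seqCnt_gamma (s t : ℝ) : seqCnt gammaSeq s t = fIdx t - fIdx s := by
  have hset : Set.range gammaSeq ∩ Set.Ioc s t
      = gammaSeq '' (Set.Ico (fIdx s) (fIdx t)) := by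
    ext x
    simp only [Set.mem_inter_iff, Set.mem_range, Set.mem_Ioc, Set.mem_image, Set.mem_Ico]
    constructor
    · rintro ⟨⟨k, rfl⟩, hs, ht⟩
      refine ⟨k, ⟨fIdx_le_iff.2 hs, ?_⟩, rfl⟩
      by_contra hc
      push_neg at hc
      exact absurd ht (not_le.2 (lt_of_lt_of_le (gammaSeq_fIdx_gt t)
        (gammaSeq_strictMono.monotone hc)))
    · rintro ⟨k, ⟨h1, h2⟩, rfl⟩
      exact ⟨⟨k, rfl⟩, fIdx_le_iff.1 h1, gammaSeq_le_of_lt_fIdx h2⟩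
  rw [seqCnt, hset, Set.ncard_image_of_injective _ gammaSeq_strictMono.injective,
    ← Finset.coe_Ico, Set.ncard_coe_finset, Nat.card_Ico]

lemma t_lt_count (s t : ℝ) (hs : 0 ≤ s) (ht : 0 < t) :
    t < ((fIdx (s+t) - fIdx s : ℕ) : ℝ) + 1
      + Real.log (((fIdx (s+t) - fIdx s : ℕ) : ℝ) + 2) := by
  obtain ⟨a, ha⟩ : ∃ a, fIdx s = a := ⟨_, rfl⟩
  obtain ⟨b, hb⟩ : ∃ b, fIdx (s+t) = b := ⟨_, rfl⟩
  rw [ha, hb]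
  have hab : a ≤ b := ha ▸ hb ▸ fIdx_mono (by linarith)
  have hgb : s + t < gammaSeq b := hb ▸ gammaSeq_fIdx_gt _
  have hcast : ((b - a : ℕ) : ℝ) = (b : ℝ) - a := by
    rw [Nat.cast_sub hab]
  rcases Nat.eq_zero_or_pos a with h0 | hpos
  · -- a = 0
    rw [h0] at hcast ⊢
    have : gammaSeq b ≤ (b:ℝ) + 1 + Real.log (b + 1) := by
      rw [gammaSeq_eq]
      have := sum_one_div_le_log b
      linarith
    have hlog : Real.log ((b:ℝ) + 1) ≤ Real.log (((b - 0 : ℕ):ℝ) + 2) := by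
      apply Real.log_le_log (by positivity)
      simp
    simp only [Nat.sub_zero] at hlog ⊢
    linarith
  · -- a ≥ 1
    obtain ⟨a', rfl⟩ : ∃ a', a = a' + 1 := ⟨a - 1, by omega⟩
    have hga' : gammaSeq a' ≤ s := gammaSeq_le_of_lt_fIdx (by rw [ha]; omega)
    have hdiff : gammaSeq b - gammaSeq a'
        = ((b:ℝ) - a') + ∑ i ∈ Finset.Ico a' b, (1:ℝ)/(i+2) := by
      rw [gammaSeq_eq, gammaSeq_eq, Finset.sum_Ico_eq_sub _ (by omega : a' ≤ b)]
      ring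
    have hn : b - a' = (b - (a'+1)) + 1 := by omega
    have hsum : ∑ i ∈ Finset.Ico a' b, (1:ℝ)/(i+2)
        ≤ Real.log (((b - a' : ℕ) : ℝ) + 1) := by
      rw [Finset.sum_Ico_eq_sum_range]
      calc ∑ j ∈ Finset.range (b - a'), (1:ℝ)/((a'+j : ℕ) + 2)
          ≤ ∑ j ∈ Finset.range (b - a'), (1:ℝ)/(j + 2) := by
            apply Finset.sum_le_sum
            intro j _
            apply one_div_le_one_div_of_le (by positivity)
            push_cast
            linarith [Nat.cast_nonneg (α := ℝ) a']
        _ ≤ Real.log ((b - a' : ℕ) + 1) := sum_one_div_le_log _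
    have hcast2 : ((b - a' : ℕ) : ℝ) = (b : ℝ) - a' := by
      rw [Nat.cast_sub (by omega)]
    have hcast3 : ((b - (a'+1) : ℕ) : ℝ) = (b : ℝ) - a' - 1 := by
      rw [Nat.cast_sub (by omega)]; push_cast; ring
    rw [hcast3]
    have hineq : t < ((b:ℝ) - a') + Real.log (((b:ℝ) - a') + 1) := by
      rw [hcast2] at hsum
      linarith
    have : Real.log (((b:ℝ) - a') + 1) = Real.log ((b:ℝ) - a' - 1 + 2) := by ring_nf
    linarith [hineq, this ▸ hineq]

lemma count_lt_t_add_one (s t : ℝ) (ht : 0 < t) :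
    ((fIdx (s+t) - fIdx s : ℕ) : ℝ) < t + 1 := by
  obtain ⟨a, ha⟩ : ∃ a, fIdx s = a := ⟨_, rfl⟩
  obtain ⟨b, hb⟩ : ∃ b, fIdx (s+t) = b := ⟨_, rfl⟩
  rw [ha, hb]
  have hab : a ≤ b := ha ▸ hb ▸ fIdx_mono (by linarith)
  rcases Nat.eq_or_lt_of_le hab with heq | hlt
  · simp [heq]; linarith
  · have hga : s < gammaSeq a := ha ▸ gammaSeq_fIdx_gt s
    have hgb1 : gammaSeq (b-1) ≤ s + t :=
      gammaSeq_le_of_lt_fIdx (by rw [hb]; omega)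
    have hgap := gammaSeq_gap (show a ≤ b - 1 by omega)
    have hc1 : (((b-1 : ℕ)):ℝ) = (b:ℝ) - 1 := by
      rw [Nat.cast_sub (by omega)]; norm_num
    have hc2 : ((b - a : ℕ) : ℝ) = (b:ℝ) - a := Nat.cast_sub hab
    rw [hc1] at hgap
    rw [hc2]
    linarith

lemma gammaSeq_tendsto : Filter.Tendsto gammaSeq Filter.atTop Filter.atTop := by
  apply Filter.tendsto_atTop_mono gammaSeq_ge
  exact Filter.tendsto_atTop_add_const_right _ 1 tendsto_natCast_atTop_atTop

lemma gammaSeq_isImp : StrictMono gammaSeq ∧ 0 < gammaSeq 0 ∧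
    Filter.Tendsto gammaSeq Filter.atTop Filter.atTop :=
  ⟨gammaSeq_strictMono, lt_of_lt_of_le one_pos (by simpa using gammaSeq_ge 0),
    gammaSeq_tendsto⟩

lemma eps_bound {ε t : ℝ} (hε : 0 < ε) (h3 : 3 ≤ t) (h25 : 25 / ε^2 ≤ t) :
    1 + Real.log (t + 3) ≤ ε * t := by
  have ht1 : (1:ℝ) ≤ t := by linarith
  have hu1 : 1 ≤ Real.sqrt t := Real.one_le_sqrt.2 ht1
  have hu0 : 0 < Real.sqrt t := by linarith
  have husq : Real.sqrt t ^ 2 = t := Real.sq_sqrt (by linarith)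
  have hs1 : Real.sqrt (t + 3) ≤ 2 * Real.sqrt t := by
    have h4 : Real.sqrt (t+3) ≤ Real.sqrt (4 * t) := Real.sqrt_le_sqrt (by linarith)
    have h5 : Real.sqrt (4 * t) = 2 * Real.sqrt t := by
      rw [Real.sqrt_mul (by norm_num) t, show (4:ℝ) = 2^2 by norm_num,
        Real.sqrt_sq (by norm_num)]
    linarith [h4, h5 ▸ h4]
  have hlog : Real.log (t + 3) ≤ 2 * Real.sqrt (t+3) := log_le_two_sqrt (by linarith)
  have hu5 : 5 / ε ≤ Real.sqrt t := by
    rw [show (5/ε : ℝ) = Real.sqrt ((5/ε)^2) from (Real.sqrt_sq (by positivity)).symm]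
    apply Real.sqrt_le_sqrt
    have : (5/ε)^2 = 25/ε^2 := by ring
    linarith [this ▸ h25]
  have key : 5 * Real.sqrt t ≤ ε * t := by
    have : ε * t = ε * Real.sqrt t * Real.sqrt t := by
      rw [mul_assoc, ← sq, husq]
    rw [this]
    have h6 : 5 ≤ ε * Real.sqrt t := by
      have := mul_le_mul_of_nonneg_left hu5 hε.le
      rw [mul_div_cancel₀ _ hε.ne'] at this
      linarith
    nlinarith
  linarith

lemma fIdx_zero : fIdx 0 = 0 :=
  Nat.le_zero.mp (fIdx_le_iff.2 (by linarith [gammaSeq_ge 0]))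

lemma fIdx_gammaSeq (K : ℕ) : fIdx (gammaSeq K) = K + 1 := by
  have h1 : fIdx (gammaSeq K) ≤ K + 1 :=
    fIdx_le_iff.2 (gammaSeq_strictMono (Nat.lt_succ_self K))
  have h2 : ¬ fIdx (gammaSeq K) ≤ K := fun h => absurd (fIdx_le_iff.1 h) (lt_irrefl _)
  omega

/-- `γ = {τ_k}` with `τ_1 = 1`, `τ_k = k + Σ_{ℓ=2}^k 1/ℓ` is an impulse-time sequence,
belongs to `Sdn(1)`, but does not belong to `Srad(n,1)` for any `n ∈ ℕ`. -/
theorem gammaSeq_mem_sdn_not_srad :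
    IsImpSeqFun gammaSeq ∧ SeqMemSdn 1 gammaSeq ∧
    ∀ n : ℕ, ¬ SeqMemSrad n 1 gammaSeq := by
  have himp : IsImpSeqFun gammaSeq := gammaSeq_isImp
  refine ⟨himp, ⟨himp, ?_⟩, ?_⟩
  · -- Sdn(1)
    intro ε hε
    rcases le_or_gt 1 ε with hε1 | hε1
    · refine ⟨1, one_pos, fun t ht s hs => ?_⟩
      have ht0 : (0:ℝ) < t := by linarith
      have : (0:ℝ) ≤ (seqCnt gammaSeq s (s + t) : ℝ) / t := by positivity
      linarith
    · refine ⟨max 3 (25 / ε^2), lt_of_lt_of_le (by norm_num) (le_max_left _ _),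
        fun t ht s hs => ?_⟩
      have h3 : 3 ≤ t := le_trans (le_max_left _ _) ht
      have h25 : 25 / ε^2 ≤ t := le_trans (le_max_right _ _) ht
      have ht0 : (0:ℝ) < t := by linarith
      rw [seqCnt_gamma]
      set m : ℕ := fIdx (s + t) - fIdx s with hm
      have h1 : t < (m:ℝ) + 1 + Real.log ((m:ℝ) + 2) := t_lt_count s t hs ht0
      have h2 : (m:ℝ) < t + 1 := count_lt_t_add_one s t ht0
      have hlog : Real.log ((m:ℝ) + 2) ≤ Real.log (t + 3) :=
        Real.log_le_log (by positivity) (by linarith)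
      have h4 : 1 + Real.log (t + 3) ≤ ε * t := eps_bound hε h3 h25
      rw [le_div_iff₀ ht0]
      nlinarith
  · -- not Srad(n, 1)
    intro n ⟨_, h⟩
    set K : ℕ := ⌈2 * Real.exp (n + 1)⌉₊ with hK
    have hKge : 2 * Real.exp (n + 1) ≤ (K:ℝ) := Nat.le_ceil _
    have hγK : 0 ≤ gammaSeq K := by linarith [gammaSeq_ge K, Nat.cast_nonneg (α := ℝ) K]
    have hcnt : (seqCnt gammaSeq 0 (gammaSeq K) : ℝ) = (K:ℝ) + 1 := by
      rw [seqCnt_gamma, fIdx_zero, fIdx_gammaSeq, Nat.sub_zero]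
      push_cast; ring
    have hbound := h 0 (gammaSeq K) le_rfl hγK
    rw [hcnt] at hbound
    have hlog : (n:ℝ) + 1 ≤ Real.log ((K:ℝ) + 2) - Real.log 2 := by
      have hexp : (0:ℝ) < 2 * Real.exp (n + 1) := by positivity
      have := Real.log_le_log hexp (show 2 * Real.exp (n+1) ≤ (K:ℝ) + 2 by linarith)
      rw [Real.log_mul (by norm_num) (Real.exp_ne_zero _), Real.log_exp] at this
      linarith
    have hγKge : (K:ℝ) + 1 + ((n:ℝ) + 1) ≤ gammaSeq K := by
      rw [gammaSeq_eq]
      have := log_le_sum_one_div K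
      linarith
    rw [div_one] at hbound
    linarith
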